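/- arXiv:0808.1298 — 2 statements merged into one kernel-verified Lean document; each statement's English description precedes it below -/
import Mathlib

section
/- Let (X,τ), (Y,τ'), (Z,τ'') be compact Hausdorff spaces, d₀ a semi metric on X whose induced topology is weaker than τ, F : Y × Z → X continuous, and d₁(z,z') = sup{ d₀(F(y,z), F(y,z')) : y ∈ Y }. For states μ on C(Y,ℂ) and ν on C(Z,ℂ), define the product functional (μ⊗ν) on C(Y×Z,ℂ) by (μ⊗ν)(g) = μ(y ↦ ν(g(y,·))), and define the semi metric d on S(C(Z,ℂ)) by d(ν,ν') = sup over μ ∈ S(C(Y,ℂ)) of ρ_L(a ↦ (μ⊗ν)(a∘F), a ↦ (μ⊗ν')(a∘F)), where ρ_L(φ,ψ) = sup{ |φ(a) − ψ(a)| : a ∈ C(X,ℂ), |a(p) − a(q)| ≤ d₀(p,q) for all p,q ∈ X }. Let N(c) = sup{ |ν(c) − ν'(c)|/d(ν,ν') : ν,ν' ∈ S(C(Z,ℂ)), d(ν,ν') ≠ 0 }, 𝒞 = { c ∈ C(Z,ℂ) : ν ↦ ν(c) is d-continuous and N(c) < ∞ }, and ρ_N(ν,ν') = sup{ |ν(c)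 − ν'(c)| : c ∈ 𝒞, N(c) ≤ 1 }. Then for all z, z' ∈ Z: d₁(z,z') = ρ_N(δ_z, δ_{z'}), where δ_z is the evaluation state on C(Z,ℂ). -/
open scoped ENNReal

noncomputable section

variable {X Y Z : Type*} [TopologicalSpace X] [CompactSpace X] [T2Space X]
  [TopologicalSpace Y] [CompactSpace Y] [T2Space Y]
  [TopologicalSpace Z] [CompactSpace Z] [T2Space Z]

/-- A state on the C*-algebra `C(W, ℂ)` of continuous functions on a compact Hausdorff
space `W`: a continuous linear functional sending the unit to `1` and taking nonnegative real
values on positive elements `star a * a`. -/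
def IsState {W : Type*} [TopologicalSpace W] [CompactSpace W] (φ : C(W, ℂ) →L[ℂ] ℂ) : Prop :=
  φ 1 = 1 ∧ ∀ a : C(W, ℂ), 0 ≤ (φ (star a * a)).re ∧ (φ (star a * a)).im = 0

/-- The product functional `(μ ⊗ ν)(g) = μ (y ↦ ν (g (y, ·)))` on `C(Y × Z, ℂ)`, realizing
the identification `C(Y × Z, ℂ) ≅ C(Y, ℂ) ⊗ C(Z, ℂ)`. -/
def tensorApply (μ : C(Y, ℂ) →L[ℂ] ℂ) (ν : C(Z, ℂ) →L[ℂ] ℂ) (g : C(Y × Z, ℂ)) : ℂ :=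
  μ ⟨fun y => ν (g.curry y), ν.continuous.comp g.curry.continuous⟩

/-- The semi metric `d` on the state space of `C(Z, ℂ)` induced by the quantum family
`a ↦ a ∘ F` and the Monge–Kantorovich metric of `d₀`:
`d(ν, ν') = sup_μ sup { |(μ⊗ν)(a∘F) - (μ⊗ν')(a∘F)| : a 1-Lipschitz for d₀ }`. -/
def dTensor (d₀ : X → X → ℝ) (F : C(Y × Z, X)) (ν ν' : C(Z, ℂ) →L[ℂ] ℂ) : ℝ≥0∞ :=
  ⨆ μ : {φ : C(Y, ℂ) →L[ℂ] ℂ // IsState φ},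
    ⨆ a ∈ {a : C(X, ℂ) | ∀ p q : X, ‖a p - a q‖ ≤ d₀ p q},
      (‖tensorApply μ.1 ν (a.comp F) - tensorApply μ.1 ν' (a.comp F)‖₊ : ℝ≥0∞)

/-- The Lipschitz-type seminorm `N = L_d` on `C(Z, ℂ)` induced by the semi metric `dTensor`
on the state space: `N(c) = sup { |ν c - ν' c| / d(ν, ν') : ν, ν' states, d(ν, ν') ≠ 0 }`. -/
def NSem (d₀ : X → X → ℝ) (F : C(Y × Z, X)) (c : C(Z, ℂ)) : ℝ≥0∞ :=
  ⨆ (ν : {φ : C(Z, ℂ) →L[ℂ] ℂ // IsState φ}) (ν' : {φ : C(Z, ℂ) →L[ℂ] ℂ // IsState φ})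
    (_ : dTensor d₀ F ν.1 ν'.1 ≠ 0), (‖ν.1 c - ν'.1 c‖₊ : ℝ≥0∞) / dTensor d₀ F ν.1 ν'.1

/-- Continuity of the evaluation map `ν ↦ ν c` on the state space of `C(Z, ℂ)` with respect
to the semi metric `dTensor`. -/
def DCont (d₀ : X → X → ℝ) (F : C(Y × Z, X)) (c : C(Z, ℂ)) : Prop :=
  ∀ ν : {φ : C(Z, ℂ) →L[ℂ] ℂ // IsState φ}, ∀ ε : ℝ, 0 < ε → ∃ δ : ℝ, 0 < δ ∧
    ∀ ν' : {φ : C(Z, ℂ) →L[ℂ] ℂ // IsState φ},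
      dTensor d₀ F ν'.1 ν.1 < ENNReal.ofReal δ → ‖ν'.1 c - ν.1 c‖ < ε

/-- The semi metric `ρ_N` on the state space of `C(Z, ℂ)`:
`ρ_N(ν, ν') = sup { |ν c - ν' c| : c ∈ 𝒞, N c ≤ 1 }`, where
`𝒞 = { c : ν ↦ ν c is d-continuous and N c < ∞ }`. -/
def rhoN (d₀ : X → X → ℝ) (F : C(Y × Z, X)) (ν ν' : C(Z, ℂ) →L[ℂ] ℂ) : ℝ≥0∞ :=
  ⨆ c ∈ {c : C(Z, ℂ) | DCont d₀ F c ∧ NSem d₀ F c ≤ 1}, (‖ν c - ν' c‖₊ : ℝ≥0∞)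

/-- The point-evaluation (Dirac) state `δ_z : c ↦ c z` on `C(Z, ℂ)`. -/
def delta (z : Z) : C(Z, ℂ) →L[ℂ] ℂ :=
  ContinuousMap.evalCLM ℂ z

set_option linter.unusedSectionVars false

lemma delta_apply (z : Z) (c : C(Z, ℂ)) : delta z c = c z := rfl

lemma isState_delta (z : Z) : IsState (delta z) := by
  refine ⟨rfl, fun a => ?_⟩
  have : (star a * a) z = (Complex.normSq (a z) : ℂ) := by
    simp [Complex.normSq_eq_conj_mul_self]
  constructor
  · rw [delta_apply, this]; exact_mod_cast Complex.normSq_nonneg _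
  · rw [delta_apply, this]; simp

lemma state_pos_part {W : Type*} [TopologicalSpace W] [CompactSpace W]
    {μ : C(W, ℂ) →L[ℂ] ℂ} (hμ : IsState μ) (s : ℝ) (k : C(W, ℂ))
    (him : ∀ w, (k w).im = 0) (hpos : ∀ w, 0 ≤ s + (k w).re) :
    0 ≤ s + (μ k).re ∧ (μ k).im = 0 := by
  set b : C(W, ℂ) := ⟨fun w => (Real.sqrt (s + (k w).re) : ℂ), by fun_prop⟩ with hbdef
  have hb : star b * b = (s : ℂ) • 1 + k := by
    ext w
    have hk : (k w) = ((k w).re : ℂ) := Complex.ext rfl (by simp [him w])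
    simp only [ContinuousMap.mul_apply, ContinuousMap.star_apply, hbdef,
      ContinuousMap.coe_mk, ContinuousMap.add_apply, ContinuousMap.smul_apply,
      ContinuousMap.one_apply, smul_eq_mul, mul_one]
    rw [Complex.star_def, Complex.conj_ofReal, ← Complex.ofReal_mul,
      Real.mul_self_sqrt (hpos w), hk]
    simp
  have h2 := hμ.2 b
  rw [hb, map_add, map_smul, hμ.1] at h2
  simpa using h2

lemma state_norm_le {W : Type*} [TopologicalSpace W] [CompactSpace W]
    {μ : C(W, ℂ) →L[ℂ] ℂ} (hμ : IsState μ) (h : C(W, ℂ)) (M : ℝ)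
    (hM0 : 0 ≤ M) (hM : ∀ w, ‖h w‖ ≤ M) : ‖μ h‖ ≤ M := by
  have real_bound : ∀ k : C(W, ℂ), (∀ w, (k w).im = 0) → (∀ w, ‖k w‖ ≤ M) →
      (μ k).im = 0 ∧ (μ k).re ≤ M := by
    intro k him hk
    have habs : ∀ w, |(k w).re| ≤ M := fun w =>
      le_trans (by exact Complex.abs_re_le_norm _) (hk w)
    have h1 := state_pos_part hμ M k him (fun w => by
      have := (abs_le.1 (habs w)).1; linarith)
    have h2 := state_pos_part hμ M (-k) (fun w => by simp [him w]) (fun w => by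
      have := (abs_le.1 (habs w)).2
      simp only [ContinuousMap.neg_apply, Complex.neg_re]; linarith)
    rw [map_neg] at h2
    exact ⟨h1.2, by simpa using h2.1⟩
  rcases eq_or_ne (μ h) 0 with h0 | h0
  · simpa [h0]
  · set c₀ : ℂ := (‖μ h‖ : ℂ) / μ h with hc₀def
    have hc₀ : ‖c₀‖ = 1 := by
      rw [hc₀def, norm_div, Complex.norm_real, norm_norm, div_self (norm_ne_zero_iff.2 h0)]
    set g : C(W, ℂ) := c₀ • h with hgdef
    have hgw : ∀ w, ‖g w‖ = ‖h w‖ := by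
      intro w; simp [hgdef, norm_smul, hc₀]
    have hμg : μ g = (‖μ h‖ : ℂ) := by
      rw [hgdef, map_smul, smul_eq_mul, hc₀def, div_mul_cancel₀ _ h0]
    set g₁ : C(W, ℂ) := ⟨fun w => ((g w).re : ℂ), by fun_prop⟩ with hg₁def
    set g₂ : C(W, ℂ) := ⟨fun w => ((g w).im : ℂ), by fun_prop⟩ with hg₂def
    have hg : g = g₁ + Complex.I • g₂ := by
      ext w
      simp only [ContinuousMap.add_apply, ContinuousMap.smul_apply, hg₁def, hg₂def,
        ContinuousMap.coe_mk, smul_eq_mul]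
      rw [mul_comm]
      exact (Complex.re_add_im _).symm
    have h1 := real_bound g₁ (fun w => by simp [hg₁def]) (fun w => by
      simp only [hg₁def, ContinuousMap.coe_mk, Complex.norm_real]
      exact le_trans (by rw [← hgw w]; exact Complex.abs_re_le_norm _) (hM w))
    have h2 := real_bound g₂ (fun w => by simp [hg₂def]) (fun w => by
      simp only [hg₂def, ContinuousMap.coe_mk, Complex.norm_real]
      exact le_trans (by rw [← hgw w]; exact Complex.abs_im_le_norm _) (hM w))
    have key : ‖μ h‖ = (μ g₁).re := by
      have : (μ g).re = (μ g₁).re + (Complex.I * μ g₂).re := by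
        rw [hg, map_add, map_smul]; simp
      rw [hμg] at this
      simp only [Complex.ofReal_re] at this
      rw [this, Complex.mul_re, Complex.I_re, Complex.I_im, h2.1]
      ring
    rw [key]; exact h1.2

/-- Theorem of Section 4 of the paper, part i.  Let `X, Y, Z` be compact
Hausdorff spaces, `d₀` a semi metric on `X` whose induced topology is weaker than the
topology of `X`, `F : Y × Z → X` continuous, and
`d₁(z, z') = sup_y d₀(F(y,z), F(y,z'))`.  Then for all `z, z' ∈ Z`,
`d₁(z, z') = ρ_N(δ_z, δ_{z'})`. -/
theorem d1_eq_rhoN_delta (d₀ : X → X → ℝ)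
    (d₀_nonneg : ∀ x y, 0 ≤ d₀ x y)
    (d₀_refl : ∀ x, d₀ x x = 0)
    (d₀_symm : ∀ x y, d₀ x y = d₀ y x)
    (d₀_triangle : ∀ x y z, d₀ x z ≤ d₀ x y + d₀ y z)
    (hweaker : ∀ (x : X) (ε : ℝ), 0 < ε →
      ∃ U : Set X, IsOpen U ∧ x ∈ U ∧ ∀ y ∈ U, d₀ x y < ε)
    (F : C(Y × Z, X)) :
    ∀ z z' : Z,
      (⨆ y : Y, ENNReal.ofReal (d₀ (F (y, z)) (F (y, z')))) =
        rhoN d₀ F (delta z) (delta z') := by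
  intro z z'
  -- continuity of d₀ x₀ ·
  have hcont : ∀ x₀ : X, Continuous fun x => d₀ x₀ x := by
    intro x₀
    rw [continuous_iff_continuousAt]
    intro q
    rw [ContinuousAt, Metric.tendsto_nhds]
    intro ε hε
    obtain ⟨U, hUopen, hqU, hU⟩ := hweaker q ε hε
    filter_upwards [hUopen.mem_nhds hqU] with p hp
    rw [Real.dist_eq, abs_lt]
    constructor
    · have := d₀_triangle x₀ p q
      have h2 := hU p hp
      rw [d₀_symm q p] at h2
      linarith
    · have := d₀_triangle x₀ q p
      have h2 := hU p hp
      linarith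
  set D : ℝ≥0∞ := ⨆ y : Y, ENNReal.ofReal (d₀ (F (y, z)) (F (y, z'))) with hD
  refine le_antisymm ?_ ?_
  · -- LHS ≤ rhoN
    refine iSup_le fun y => ?_
    set x₀ : X := F (y, z) with hx₀
    set a : C(X, ℂ) := ⟨fun x => (d₀ x₀ x : ℂ), by
      exact Complex.continuous_ofReal.comp (hcont x₀)⟩ with hadef
    have ha : a ∈ {a : C(X, ℂ) | ∀ p q : X, ‖a p - a q‖ ≤ d₀ p q} := by
      intro p q
      simp only [hadef, ContinuousMap.coe_mk, ← Complex.ofReal_sub, Complex.norm_real]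
      rw [Real.norm_eq_abs, abs_le]
      constructor
      · have := d₀_triangle x₀ p q; linarith
      · have := d₀_triangle x₀ q p; rw [d₀_symm q p] at this; linarith
    set c : C(Z, ℂ) := ⟨fun w => (d₀ x₀ (F (y, w)) : ℂ), by
      exact Complex.continuous_ofReal.comp ((hcont x₀).comp
        (F.continuous.comp (Continuous.prodMk_right y)))⟩ with hcdef
    have hcurry : (a.comp F).curry y = c := by
      ext w
      simp [hadef, hcdef]
    -- key estimate: |ν c - ν' c| ≤ dTensor ν ν'
    have hkey : ∀ ν ν' : {φ : C(Z, ℂ) →L[ℂ] ℂ // IsState φ},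
        (‖ν.1 c - ν'.1 c‖₊ : ℝ≥0∞) ≤ dTensor d₀ F ν.1 ν'.1 := by
      intro ν ν'
      have hta : ∀ ρ : C(Z, ℂ) →L[ℂ] ℂ, tensorApply (delta y) ρ (a.comp F) = ρ c := by
        intro ρ
        rw [tensorApply, delta_apply]
        simp only [ContinuousMap.coe_mk, hcurry]
      refine le_trans ?_ (le_iSup _ (⟨delta y, isState_delta y⟩ :
        {φ : C(Y, ℂ) →L[ℂ] ℂ // IsState φ}))
      refine le_trans ?_ (le_iSup₂ a ha)
      rw [hta, hta]
    have hN : NSem d₀ F c ≤ 1 := by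
      refine iSup_le fun ν => iSup_le fun ν' => iSup_le fun hne => ?_
      exact ENNReal.div_le_of_le_mul (by simpa using hkey ν ν')
    have hC : DCont d₀ F c := by
      intro ν ε hε
      refine ⟨ε, hε, fun ν' hlt => ?_⟩
      have := lt_of_le_of_lt (hkey ν' ν) hlt
      rwa [← enorm_eq_nnnorm, ← ofReal_norm, ENNReal.ofReal_lt_ofReal_iff hε] at this
    have hcz : c z = 0 := by
      simp [hcdef, hx₀, d₀_refl]
    have hval : ENNReal.ofReal (d₀ (F (y, z)) (F (y, z'))) =
        (‖delta z c - delta z' c‖₊ : ℝ≥0∞) := by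
      rw [delta_apply, delta_apply, hcz, ← enorm_eq_nnnorm, ← ofReal_norm]
      congr 1
      simp only [hcdef, ContinuousMap.coe_mk, zero_sub, norm_neg, Complex.norm_real]
      rw [Real.norm_eq_abs, abs_of_nonneg (d₀_nonneg _ _)]
    rw [hval, rhoN]
    refine le_iSup₂_of_le c ?_ le_rfl
    exact ⟨hC, hN⟩
  · -- rhoN ≤ LHS
    refine iSup₂_le fun c hc => ?_
    rcases eq_or_ne D ⊤ with hDtop | hDtop
    · rw [hDtop]; exact le_top
    set M : ℝ := D.toReal with hM
    have hM0 : 0 ≤ M := ENNReal.toReal_nonneg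
    -- dTensor (delta z) (delta z') ≤ D
    have hdT : dTensor d₀ F (delta z) (delta z') ≤ D := by
      refine iSup_le fun μ => iSup₂_le fun a ha => ?_
      have cont1 : Continuous fun y : Y => a (F (y, z)) :=
        a.continuous.comp (F.continuous.comp (continuous_id.prodMk continuous_const))
      have cont2 : Continuous fun y : Y => a (F (y, z')) :=
        a.continuous.comp (F.continuous.comp (continuous_id.prodMk continuous_const))
      set h₁ : C(Y, ℂ) := ⟨fun y => a (F (y, z)), cont1⟩ with hh₁
      set h₂ : C(Y, ℂ) := ⟨fun y => a (F (y, z')), cont2⟩ with hh₂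
      have hta1 : tensorApply μ.1 (delta z) (a.comp F) = μ.1 h₁ := by
        rw [tensorApply]; congr 1
      have hta2 : tensorApply μ.1 (delta z') (a.comp F) = μ.1 h₂ := by
        rw [tensorApply]; congr 1
      rw [hta1, hta2, ← map_sub]
      have hbd : ∀ y : Y, ‖(h₁ - h₂) y‖ ≤ M := by
        intro y
        have h1 : ‖a (F (y, z)) - a (F (y, z'))‖ ≤ d₀ (F (y, z)) (F (y, z')) := ha _ _
        have h2 : ENNReal.ofReal (d₀ (F (y, z)) (F (y, z'))) ≤ D :=
          (le_iSup (fun y => ENNReal.ofReal (d₀ (F (y, z)) (F (y, z')))) y).trans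
            (le_of_eq hD.symm)
        have h3 : d₀ (F (y, z)) (F (y, z')) ≤ M :=
          (ENNReal.ofReal_le_iff_le_toReal hDtop).1 h2
        calc ‖(h₁ - h₂) y‖ = ‖a (F (y, z)) - a (F (y, z'))‖ := by
              simp [hh₁, hh₂]
          _ ≤ _ := le_trans h1 h3
      have := state_norm_le μ.2 (h₁ - h₂) M hM0 hbd
      rw [← enorm_eq_nnnorm, ← ofReal_norm]
      calc ENNReal.ofReal ‖μ.1 (h₁ - h₂)‖ ≤ ENNReal.ofReal M := ENNReal.ofReal_le_ofReal this
        _ = D := ENNReal.ofReal_toReal hDtop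
    rcases eq_or_ne (dTensor d₀ F (delta z) (delta z')) 0 with hdT0 | hdT0
    · -- use continuity
      have hzero : ‖delta z c - delta z' c‖ = 0 := by
        by_contra hne
        have hpos : 0 < ‖delta z c - delta z' c‖ :=
          lt_of_le_of_ne (norm_nonneg _) (Ne.symm hne)
        obtain ⟨δ, hδ, hcont'⟩ := hc.1 ⟨delta z', isState_delta z'⟩ _ hpos
        have := hcont' ⟨delta z, isState_delta z⟩ (by
          rw [hdT0]; exact ENNReal.ofReal_pos.2 hδ)
        exact absurd this (lt_irrefl _)
      have : (‖delta z c - delta z' c‖₊ : ℝ≥0∞) = 0 := by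
        rw [← enorm_eq_nnnorm, ← ofReal_norm, hzero, ENNReal.ofReal_zero]
      rw [this]; exact zero_le
    · -- use NSem ≤ 1
      have hle : (‖delta z c - delta z' c‖₊ : ℝ≥0∞) / dTensor d₀ F (delta z) (delta z') ≤ 1 := by
        refine le_trans ?_ hc.2
        exact le_iSup_of_le ⟨delta z, isState_delta z⟩ (le_iSup_of_le ⟨delta z', isState_delta z'⟩
          (le_iSup_of_le hdT0 le_rfl))
      have hdTne : dTensor d₀ F (delta z) (delta z') ≠ ⊤ :=
        ne_top_of_le_ne_top hDtop hdT
      calc (‖delta z c - delta z' c‖₊ : ℝ≥0∞)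
          = (‖delta z c - delta z' c‖₊ : ℝ≥0∞) / dTensor d₀ F (delta z) (delta z') *
            dTensor d₀ F (delta z) (delta z') := by
            rw [ENNReal.div_mul_cancel hdT0 hdTne]
        _ ≤ 1 * dTensor d₀ F (delta z) (delta z') := mul_le_mul_left hle _
        _ = dTensor d₀ F (delta z) (delta z') := one_mul _
        _ ≤ D := hdT


end
end

section
/- Let (X,τ), (Y,τ'), (Z,τ'') be compact Hausdorff spaces, d₀ a semi metric on X whose induced topology is weaker than τ, F : Y × Z → X continuous, and d₁(z,z') = sup{ d₀(F(y,z), F(y,z')) : y ∈ Y }. With d, N and 𝒞 defined as follows: (μ⊗ν)(g) = μ(y ↦ ν(g(y,·))) for g ∈ C(Y×Z,ℂ); d(ν,ν') = sup over μ ∈ S(C(Y,ℂ)) of sup{ |(μ⊗ν)(a∘F) − (μ⊗ν')(a∘F)| : a ∈ C(X,ℂ), |a(p) − a(q)| ≤ d₀(p,q) ∀ p,q }; N(c) = sup{ |ν(c) − ν'(c)|/d(ν,ν') : ν,ν' ∈ S(C(Z,ℂ)), d(ν,ν') ≠ 0 }; 𝒞 = { c ∈ C(Z,ℂ) : ν ↦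 ν(c) is d-continuous and N(c) < ∞ }. Then every c ∈ 𝒞 satisfies |c(z) − c(z')| ≤ N(c)·d₁(z,z') for all z,z' ∈ Z; in particular 𝒞 ⊆ Lip(Z,d₁) and the Lipschitz seminorm satisfies ‖c‖_{d₁} ≤ N(c). -/
open scoped ENNReal

noncomputable section

variable {X Y Z : Type*} [TopologicalSpace X] [CompactSpace X] [T2Space X]
  [TopologicalSpace Y] [CompactSpace Y] [T2Space Y]
  [TopologicalSpace Z] [CompactSpace Z] [T2Space Z]

/-- The semi metric `d₁(z, z') = sup_y d₀(F(y,z), F(y,z'))` on `Z`, valued in `[0, ∞]`. -/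
def d1 (d₀ : X → X → ℝ) (F : C(Y × Z, X)) (z z' : Z) : ℝ≥0∞ :=
  ⨆ y : Y, ENNReal.ofReal (d₀ (F (y, z)) (F (y, z')))

set_option linter.unusedSectionVars false

section Aux
variable {W : Type*} [TopologicalSpace W] [CompactSpace W]

/-- real continuous map as complex one -/
def cm (u : C(W, ℝ)) : C(W, ℂ) := ⟨fun w => (u w : ℂ), Complex.continuous_ofReal.comp u.continuous⟩

lemma state_pos (φ : C(W, ℂ) →L[ℂ] ℂ) (hφ : IsState φ) (u : C(W, ℝ)) (hu : ∀ w, 0 ≤ u w) :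
    0 ≤ (φ (cm u)).re ∧ (φ (cm u)).im = 0 := by
  have key : star (cm ⟨fun w => Real.sqrt (u w), (Real.continuous_sqrt.comp u.continuous)⟩) *
      cm ⟨fun w => Real.sqrt (u w), (Real.continuous_sqrt.comp u.continuous)⟩ = cm u := by
    ext w
    simp [cm, ← Complex.ofReal_mul, Real.mul_self_sqrt (hu w)]
  have := hφ.2 (cm ⟨fun w => Real.sqrt (u w), (Real.continuous_sqrt.comp u.continuous)⟩)
  rwa [key] at this

lemma cm_add (u v : C(W, ℝ)) : cm (u + v) = cm u + cm v := by
  ext w; simp [cm]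

lemma state_real (φ : C(W, ℂ) →L[ℂ] ℂ) (hφ : IsState φ) (f : C(W, ℝ)) :
    (φ (cm f)).im = 0 ∧ |(φ (cm f)).re| ≤ ‖f‖ := by
  have habs : ∀ w, |f w| ≤ ‖f‖ := fun w => f.norm_coe_le_norm w
  have h1 : cm (ContinuousMap.const W ‖f‖) = (‖f‖ : ℂ) • 1 := by ext w; simp [cm]
  have e1 : φ (cm (ContinuousMap.const W ‖f‖ + f)) = (‖f‖ : ℂ) + φ (cm f) := by
    rw [cm_add, map_add, h1, map_smul, hφ.1, smul_eq_mul, mul_one]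
  have e2 : φ (cm (ContinuousMap.const W ‖f‖ + (-f))) = (‖f‖ : ℂ) - φ (cm f) := by
    have : cm (-f) = -(cm f) := by ext w; simp [cm]
    rw [cm_add, map_add, h1, this, map_neg, map_smul, hφ.1, smul_eq_mul, mul_one, sub_eq_add_neg]
  have p1 := state_pos φ hφ _ (fun w => by
    simp only [ContinuousMap.add_apply, ContinuousMap.const_apply]; linarith [neg_le_of_abs_le (habs w)] : ∀ w, 0 ≤ (ContinuousMap.const W ‖f‖ + f) w)
  have p2 := state_pos φ hφ _ (fun w => by
    simp only [ContinuousMap.add_apply, ContinuousMap.neg_apply, ContinuousMap.const_apply]; linarith [le_of_abs_le (habs w)] : ∀ w, 0 ≤ (ContinuousMap.const W ‖f‖ + (-f)) w)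
  rw [e1] at p1
  rw [e2] at p2
  simp only [Complex.add_re, Complex.add_im, Complex.sub_re, Complex.sub_im,
    Complex.ofReal_re, Complex.ofReal_im] at p1 p2
  constructor
  · linarith [p1.2, p2.2]
  · rw [abs_le]; constructor <;> linarith [p1.1, p2.1]

def cmRe (g : C(W, ℂ)) : C(W, ℝ) := ⟨fun w => (g w).re, Complex.continuous_re.comp g.continuous⟩
def cmIm (g : C(W, ℂ)) : C(W, ℝ) := ⟨fun w => (g w).im, Complex.continuous_im.comp g.continuous⟩

lemma cm_decomp (g : C(W, ℂ)) : g = cm (cmRe g) + Complex.I • cm (cmIm g) := by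
  ext w
  simp [cm, cmRe, cmIm, Complex.ext_iff]

lemma state_norm_le_s18 (φ : C(W, ℂ) →L[ℂ] ℂ) (hφ : IsState φ) (g : C(W, ℂ)) : ‖φ g‖ ≤ ‖g‖ := by
  rcases eq_or_ne (φ g) 0 with h0 | h0
  · rw [h0]; simpa using norm_nonneg g
  · set t := φ g with ht
    set lam : ℂ := (starRingEnd ℂ) t / (‖t‖ : ℂ) with hlam
    have hnormt : (‖t‖ : ℝ) ≠ 0 := norm_ne_zero_iff.mpr h0
    have hlamnorm : ‖lam‖ = 1 := by
      rw [hlam, norm_div, RCLike.norm_conj, Complex.norm_real, norm_norm]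
      exact div_self hnormt
    set h : C(W, ℂ) := lam • g with hh
    have hφh : φ h = (‖t‖ : ℂ) := by
      rw [hh, map_smul, smul_eq_mul, ← ht, hlam, div_mul_eq_mul_div]
      have e : (starRingEnd ℂ) t * t = ((‖t‖ : ℝ)^2 : ℂ) := by
        rw [← Complex.normSq_eq_conj_mul_self, Complex.normSq_eq_norm_sq]
        push_cast; ring
      rw [e, div_eq_iff (by exact_mod_cast hnormt)]
      push_cast; ring
    have hre := state_real φ hφ (cmRe h)
    have him := state_real φ hφ (cmIm h)
    have hdec : φ h = φ (cm (cmRe h)) + Complex.I * φ (cm (cmIm h)) := by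
      conv_lhs => rw [cm_decomp h]
      rw [map_add, map_smul, smul_eq_mul]
    have key : ‖t‖ = (φ (cm (cmRe h))).re - (φ (cm (cmIm h))).im := by
      have e2 := congrArg Complex.re (hφh.symm.trans hdec)
      simpa [Complex.add_re, Complex.mul_re, Complex.I_re, Complex.I_im, sub_eq_add_neg] using e2
    have hnorm_le : ‖cmRe h‖ ≤ ‖h‖ := by
      rw [ContinuousMap.norm_le _ (norm_nonneg h)]
      intro w
      calc ‖(cmRe h) w‖ ≤ ‖h w‖ := by
            simpa [cmRe] using Complex.abs_re_le_norm (h w)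
        _ ≤ ‖h‖ := h.norm_coe_le_norm w
    have hnh : ‖h‖ = ‖g‖ := by rw [hh, norm_smul, hlamnorm, one_mul]
    calc ‖t‖ = (φ (cm (cmRe h))).re - (φ (cm (cmIm h))).im := key
      _ = (φ (cm (cmRe h))).re := by rw [him.1, sub_zero]
      _ ≤ |(φ (cm (cmRe h))).re| := le_abs_self _
      _ ≤ ‖cmRe h‖ := hre.2
      _ ≤ ‖h‖ := hnorm_le
      _ = ‖g‖ := hnh

end Aux


lemma evalCLM_apply' {W : Type*} [TopologicalSpace W] [CompactSpace W] (w : W) (f : C(W, ℂ)) :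
    ContinuousMap.evalCLM ℂ w f = f w := rfl

lemma isState_eval {W : Type*} [TopologicalSpace W] [CompactSpace W] (w : W) :
    IsState (ContinuousMap.evalCLM ℂ w) := by
  constructor
  · simp [evalCLM_apply']
  · intro a
    have : ContinuousMap.evalCLM ℂ w (star a * a) = (Complex.normSq (a w) : ℂ) := by
      rw [evalCLM_apply']
      simp [Complex.normSq_eq_conj_mul_self]
    rw [this]
    simp [Complex.normSq_nonneg]

lemma exists_bound (d₀ : X → X → ℝ)
    (d₀_nonneg : ∀ x y, 0 ≤ d₀ x y)
    (d₀_symm : ∀ x y, d₀ x y = d₀ y x)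
    (d₀_triangle : ∀ x y z, d₀ x z ≤ d₀ x y + d₀ y z)
    (hweaker : ∀ (x : X) (ε : ℝ), 0 < ε →
      ∃ U : Set X, IsOpen U ∧ x ∈ U ∧ ∀ y ∈ U, d₀ x y < ε) :
    ∃ B : ℝ, ∀ p q : X, d₀ p q ≤ B := by
  choose U hUopen hUmem hUlt using fun x => hweaker x 1 one_pos
  obtain ⟨s, hs⟩ := isCompact_univ.elim_finite_subcover U hUopen
    (fun x _ => Set.mem_iUnion.2 ⟨x, hUmem x⟩)
  refine ⟨2 + ∑ x ∈ s, ∑ y ∈ s, d₀ x y, fun p q => ?_⟩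
  obtain ⟨i, hi, hpi⟩ : ∃ i ∈ s, p ∈ U i := by simpa using hs (Set.mem_univ p)
  obtain ⟨j, hj, hqj⟩ : ∃ j ∈ s, q ∈ U j := by simpa using hs (Set.mem_univ q)
  have h1 : d₀ p i < 1 := by rw [d₀_symm]; exact hUlt i p hpi
  have h2 : d₀ j q < 1 := hUlt j q hqj
  have h3 : d₀ i j ≤ ∑ x ∈ s, ∑ y ∈ s, d₀ x y :=
    le_trans (Finset.single_le_sum (fun y _ => d₀_nonneg i y) hj)
      (Finset.single_le_sum (f := fun x => ∑ y ∈ s, d₀ x y)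
        (fun x _ => Finset.sum_nonneg fun y _ => d₀_nonneg x y) hi)
  have t1 := d₀_triangle p i q
  have t2 := d₀_triangle i j q
  linarith

lemma dTensor_eval_le (d₀ : X → X → ℝ) (F : C(Y × Z, X)) (z z' : Z) (t : ℝ) (ht : 0 ≤ t)
    (hbound : ∀ y, d₀ (F (y, z)) (F (y, z')) ≤ t) :
    dTensor d₀ F (ContinuousMap.evalCLM ℂ z) (ContinuousMap.evalCLM ℂ z')
      ≤ ENNReal.ofReal t := by
  refine iSup_le fun μ => iSup_le fun a => iSup_le fun ha => ?_
  set g1 : C(Y, ℂ) := ⟨fun y => a (F (y, z)),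
    a.continuous.comp (F.continuous.comp (continuous_id.prodMk continuous_const))⟩ with hg1
  set g2 : C(Y, ℂ) := ⟨fun y => a (F (y, z')),
    a.continuous.comp (F.continuous.comp (continuous_id.prodMk continuous_const))⟩ with hg2
  have e1 : tensorApply μ.1 (ContinuousMap.evalCLM ℂ z) (a.comp F) = μ.1 g1 := rfl
  have e2 : tensorApply μ.1 (ContinuousMap.evalCLM ℂ z') (a.comp F) = μ.1 g2 := rfl
  have hnorm : ‖μ.1 g1 - μ.1 g2‖ ≤ t := by
    rw [← map_sub]
    refine le_trans (state_norm_le_s18 μ.1 μ.2 (g1 - g2)) ?_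
    rw [ContinuousMap.norm_le _ ht]
    intro y
    exact le_trans (ha (F (y, z)) (F (y, z'))) (hbound y)
  rw [e1, e2, ← enorm_eq_nnnorm, ← ofReal_norm]
  exact ENNReal.ofReal_le_ofReal hnorm

/-- Theorem of Section 4 of the paper, parts ii and iii.  Let `X, Y, Z` be
compact Hausdorff spaces, `d₀` a semi metric on `X` whose induced topology is weaker than the
topology of `X`, `F : Y × Z → X` continuous, and `d₁(z, z') = sup_y d₀(F(y,z), F(y,z'))`.
Then every `c ∈ 𝒞` satisfies `|c z - c z'| ≤ N(c) · d₁(z, z')` for all `z, z'`; in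
particular `c` is `d₁`-continuous with Lipschitz seminorm `‖c‖_{d₁} ≤ N(c)`, i.e.
`𝒞 ⊆ Lip(Z, d₁)` and `‖·‖_{d₁} ≤ N` on `𝒞`. -/
theorem mem_C_lipschitz (d₀ : X → X → ℝ)
    (d₀_nonneg : ∀ x y, 0 ≤ d₀ x y)
    (d₀_refl : ∀ x, d₀ x x = 0)
    (d₀_symm : ∀ x y, d₀ x y = d₀ y x)
    (d₀_triangle : ∀ x y z, d₀ x z ≤ d₀ x y + d₀ y z)
    (hweaker : ∀ (x : X) (ε : ℝ), 0 < ε →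
      ∃ U : Set X, IsOpen U ∧ x ∈ U ∧ ∀ y ∈ U, d₀ x y < ε)
    (F : C(Y × Z, X)) :
    ∀ c : C(Z, ℂ), DCont d₀ F c → NSem d₀ F c ≠ ⊤ →
      (∀ z z' : Z, (‖c z - c z'‖₊ : ℝ≥0∞) ≤ NSem d₀ F c * d1 d₀ F z z') ∧
      (⨆ (z : Z) (z' : Z) (_ : d1 d₀ F z z' ≠ 0),
          (‖c z - c z'‖₊ : ℝ≥0∞) / d1 d₀ F z z') ≤ NSem d₀ F c ∧
      (∀ (z : Z) (ε : ℝ), 0 < ε → ∃ δ : ℝ, 0 < δ ∧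
        ∀ z' : Z, d1 d₀ F z' z < ENNReal.ofReal δ → ‖c z' - c z‖ < ε) := by
  intro c hcont hN
  obtain ⟨B, hB⟩ := exists_bound d₀ d₀_nonneg d₀_symm d₀_triangle hweaker
  have hd1B : ∀ z z' : Z, d1 d₀ F z z' ≤ ENNReal.ofReal B :=
    fun z z' => iSup_le fun y => ENNReal.ofReal_le_ofReal (hB _ _)
  have hd1top : ∀ z z' : Z, d1 d₀ F z z' ≠ ⊤ :=
    fun z z' => (lt_of_le_of_lt (hd1B z z') ENNReal.ofReal_lt_top).ne
  have hdle : ∀ z z' : Z,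
      dTensor d₀ F (ContinuousMap.evalCLM ℂ z) (ContinuousMap.evalCLM ℂ z')
        ≤ d1 d₀ F z z' := by
    intro z z'
    have hb : ∀ y : Y, d₀ (F (y, z)) (F (y, z')) ≤ (d1 d₀ F z z').toReal := by
      intro y
      have h1 : ENNReal.ofReal (d₀ (F (y, z)) (F (y, z'))) ≤ d1 d₀ F z z' :=
        le_iSup (fun y => ENNReal.ofReal (d₀ (F (y, z)) (F (y, z')))) y
      rw [← ENNReal.ofReal_toReal (hd1top z z')] at h1
      exact (ENNReal.ofReal_le_ofReal_iff ENNReal.toReal_nonneg).mp h1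
    have := dTensor_eval_le d₀ F z z' (d1 d₀ F z z').toReal ENNReal.toReal_nonneg hb
    rwa [ENNReal.ofReal_toReal (hd1top z z')] at this
  have K : ∀ z z' : Z, (‖c z - c z'‖₊ : ℝ≥0∞) ≤ NSem d₀ F c * d1 d₀ F z z' := by
    intro z z'
    set νz : {φ : C(Z, ℂ) →L[ℂ] ℂ // IsState φ} :=
      ⟨ContinuousMap.evalCLM ℂ z, isState_eval z⟩ with hνz
    set νz' : {φ : C(Z, ℂ) →L[ℂ] ℂ // IsState φ} :=
      ⟨ContinuousMap.evalCLM ℂ z', isState_eval z'⟩ with hνz'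
    by_cases hd : dTensor d₀ F νz.1 νz'.1 = 0
    · have hsmall : ∀ ε : ℝ, 0 < ε → ‖c z - c z'‖ < ε := by
        intro ε hε
        obtain ⟨δ, hδpos, hδ⟩ := hcont νz' ε hε
        have := hδ νz (by rw [hd]; exact ENNReal.ofReal_pos.mpr hδpos)
        exact this
      have hzero : c z - c z' = 0 := by
        by_contra hne
        exact lt_irrefl _ (hsmall ‖c z - c z'‖ (norm_pos_iff.mpr hne))
      rw [hzero]
      simp
    · have hdtop : dTensor d₀ F νz.1 νz'.1 ≠ ⊤ :=
        (lt_of_le_of_lt (le_trans (hdle z z') (hd1B z z')) ENNReal.ofReal_lt_top).ne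
      have hterm : (‖νz.1 c - νz'.1 c‖₊ : ℝ≥0∞) / dTensor d₀ F νz.1 νz'.1 ≤ NSem d₀ F c :=
        le_iSup_of_le νz (le_iSup_of_le νz' (le_iSup_of_le hd le_rfl))
      rw [ENNReal.div_le_iff hd hdtop] at hterm
      exact le_trans hterm (mul_le_mul_right (hdle z z') _)
  refine ⟨K, ?_, ?_⟩
  · refine iSup_le fun z => iSup_le fun z' => iSup_le fun h1 => ?_
    rw [ENNReal.div_le_iff h1 (hd1top z z')]
    exact K z z'
  · intro z ε hε
    set n : ℝ := (NSem d₀ F c).toReal with hn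
    have hn0 : 0 ≤ n := ENNReal.toReal_nonneg
    refine ⟨ε / (n + 1), by positivity, fun z' hz' => ?_⟩
    have h1 : (‖c z' - c z‖₊ : ℝ≥0∞) ≤ NSem d₀ F c * d1 d₀ F z' z := K z' z
    have h2 : NSem d₀ F c * d1 d₀ F z' z ≤ ENNReal.ofReal (n * (ε / (n + 1))) := by
      calc NSem d₀ F c * d1 d₀ F z' z
          ≤ NSem d₀ F c * ENNReal.ofReal (ε / (n + 1)) := mul_le_mul_right hz'.le _
        _ = ENNReal.ofReal n * ENNReal.ofReal (ε / (n + 1)) := by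
            rw [hn, ENNReal.ofReal_toReal hN]
        _ = ENNReal.ofReal (n * (ε / (n + 1))) := (ENNReal.ofReal_mul hn0).symm
    have h3 : (‖c z' - c z‖₊ : ℝ≥0∞) ≤ ENNReal.ofReal (n * (ε / (n + 1))) := le_trans h1 h2
    rw [← enorm_eq_nnnorm, ← ofReal_norm,
      ENNReal.ofReal_le_ofReal_iff (by positivity)] at h3
    have hlt : n * (ε / (n + 1)) < ε := by
      rw [mul_div_assoc']
      rw [div_lt_iff₀ (by positivity)]
      nlinarith
    exact lt_of_le_of_lt h3 hlt

end
end
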